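/- Fix a symmetric positive definite d_Y × d_Y real matrix R, a d_Y × d_X real matrix H, a continuously differentiable function k : ℝ^{d_Y} → ℝ, and a point y ∈ ℝ^{d_Y} with k(y) > 0. Define N = (1/(2 k(y)²)) R and the corrected observation ỹ = y − 2 N ∇(k²)(y). Then for every x ∈ ℝ^{d_X}, the one-sample diffusion score matching loss L(x) = k(y)² (y − H x)ᵀ R⁻¹ (y − H x) − 2 (y − H x)ᵀ ∇(k²)(y) − 2 d_Y k(y)² decomposes as L(x) = (1/2) xᵀ Hᵀ N⁻¹ H x − xᵀ Hᵀ N⁻¹ ỹ + C, where the constant C = k(y)² yᵀ R⁻¹ y − 2 yᵀ ∇(k²)(y) − 2 d_Y k(y)² does not depend on x. -/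
import Mathlib


open Matrix

/-- Decomposition of the one-sample diffusion score matching loss into a quadratic form
in `x` plus a constant: `L(x) = (1/2) xᵀ Hᵀ N⁻¹ H x − xᵀ Hᵀ N⁻¹ ỹ + C`. -/
theorem dsm_loss_decomposition {dX dY : ℕ}
    (R : Matrix (Fin dY) (Fin dY) ℝ) (hR : R.PosDef)
    (H : Matrix (Fin dY) (Fin dX) ℝ)
    (k : (Fin dY → ℝ) → ℝ) (hk : ContDiff ℝ 1 k)
    (y : Fin dY → ℝ) (hky : 0 < k y)
    (gk : Fin dY → ℝ)
    (hgk : gk = fun i => fderiv ℝ (fun z => (k z) ^ 2) y (Pi.single i 1))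
    (N : Matrix (Fin dY) (Fin dY) ℝ) (hN : N = (1 / (2 * (k y) ^ 2)) • R)
    (ytil : Fin dY → ℝ) (hytil : ytil = y - (2 : ℝ) • N.mulVec gk)
    (Lx : (Fin dX → ℝ) → ℝ)
    (hLx : Lx = fun x =>
      (k y) ^ 2 * ((y - H.mulVec x) ⬝ᵥ R⁻¹.mulVec (y - H.mulVec x))
        - 2 * ((y - H.mulVec x) ⬝ᵥ gk) - 2 * (dY : ℝ) * (k y) ^ 2)
    (C : ℝ)
    (hC : C = (k y) ^ 2 * (y ⬝ᵥ R⁻¹.mulVec y) - 2 * (y ⬝ᵥ gk) - 2 * (dY : ℝ) * (k y) ^ 2) :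
    ∀ x : Fin dX → ℝ,
      Lx x = (1 / 2) * (x ⬝ᵥ (Hᵀ * N⁻¹ * H).mulVec x)
        - x ⬝ᵥ (Hᵀ * N⁻¹).mulVec ytil + C := by
  intro x
  set c : ℝ := (k y) ^ 2 with hc
  have hc0 : c ≠ 0 := by positivity
  have h2c : (2 * c) ≠ 0 := by positivity
  have hRdet : IsUnit R.det := isUnit_iff_ne_zero.2 hR.det_pos.ne'
  have hNright : N * ((2 * c) • R⁻¹) = 1 := by
    rw [hN, Matrix.smul_mul, Matrix.mul_smul, smul_smul,
      one_div, inv_mul_cancel₀ h2c, one_smul, R.mul_nonsing_inv hRdet]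
  have hNinv : N⁻¹ = (2 * c) • R⁻¹ := inv_eq_right_inv hNright
  have hNleft : N⁻¹ * N = 1 := by
    rw [hNinv, mul_eq_one_comm.1 hNright]
  have hRinvT : R⁻¹ᵀ = R⁻¹ := hR.inv.1
  -- symmetry of the quadratic form
  have hsym : ∀ u v : Fin dY → ℝ, u ⬝ᵥ R⁻¹.mulVec v = v ⬝ᵥ R⁻¹.mulVec u := by
    intro u v
    rw [Matrix.dotProduct_mulVec, ← Matrix.mulVec_transpose, hRinvT, dotProduct_comm]
  -- transpose trick
  have htr : ∀ v : Fin dY → ℝ, x ⬝ᵥ Hᵀ.mulVec v = (H.mulVec x) ⬝ᵥ v := by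
    intro v
    rw [Matrix.dotProduct_mulVec, Matrix.vecMul_transpose]
  set z : Fin dY → ℝ := H.mulVec x with hz
  -- quadratic term
  have hq : x ⬝ᵥ (Hᵀ * N⁻¹ * H).mulVec x = (2 * c) * (z ⬝ᵥ R⁻¹.mulVec z) := by
    rw [hNinv, Matrix.mul_smul, Matrix.smul_mul, Matrix.smul_mulVec,
      dotProduct_smul, smul_eq_mul]
    congr 1
    rw [← Matrix.mulVec_mulVec, ← Matrix.mulVec_mulVec, htr]
  -- linear term
  have hNgk : N⁻¹.mulVec (N.mulVec gk) = gk := by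
    rw [Matrix.mulVec_mulVec, hNleft, Matrix.one_mulVec]
  have hl : x ⬝ᵥ (Hᵀ * N⁻¹).mulVec ytil
      = (2 * c) * (z ⬝ᵥ R⁻¹.mulVec y) - 2 * (z ⬝ᵥ gk) := by
    rw [hytil, ← Matrix.mulVec_mulVec, Matrix.mulVec_sub, Matrix.mulVec_smul, hNgk]
    rw [Matrix.mulVec_sub, dotProduct_sub, htr, Matrix.mulVec_smul, dotProduct_smul,
      smul_eq_mul, htr, hNinv, Matrix.smul_mulVec, dotProduct_smul, smul_eq_mul]
  have hexp : (y - z) ⬝ᵥ R⁻¹.mulVec (y - z)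
      = y ⬝ᵥ R⁻¹.mulVec y - 2 * (z ⬝ᵥ R⁻¹.mulVec y) + z ⬝ᵥ R⁻¹.mulVec z := by
    rw [sub_dotProduct, Matrix.mulVec_sub, dotProduct_sub, dotProduct_sub, hsym y z]
    ring
  rw [hLx, hC, hq, hl]
  simp only [← hz, hexp, sub_dotProduct]
  ring
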